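/- Let S be a compact operator on L²([0,1]) with ‖S‖ < 1. Then I + S is invertible with bounded inverse, and there exists c > 0 such that for all 0 ≤ t₁ < ... < t_k ≤ 1, the vectors (I+S)1_{(t_i, t_{i+1}]}, i = 1,...,k-1, are linearly independent; moreover the Gram determinant of their normalizations is bounded below: G((I+S)Δg̃⁰(t_1), ..., (I+S)Δg̃⁰(t_{k-1})) ≥ c when restricted to indices outside any subset M (with the normalized increments Δg̃⁰(t_i) = 1_{(t_i,t_{i+1}]}/√(t_{i+1}-t_i)). -/

import Mathlib

open MeasureTheory Set Filter

/-- Lebesgue measure on `[0,1]`. -/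
noncomputable def μ01 : Measure ℝ := volume.restrict (Icc 0 1)

/-- The increment `1_{(a,b]}` of `g⁰(t) = 1_{[0,t]}` as an element of `L²([0,1])`. -/
noncomputable def incr (a b : ℝ) : Lp ℝ 2 μ01 :=
  indicatorConstLp 2 (measurableSet_Ioc (a := a) (b := b))
    ((Measure.restrict_apply_le _ _).trans_lt measure_Ioc_lt_top).ne (1 : ℝ)

/-- The normalized increment `Δg̃⁰ = 1_{(a,b]} / √(b-a)`. -/
noncomputable def nincr (a b : ℝ) : Lp ℝ 2 μ01 :=
  (Real.sqrt (b - a))⁻¹ • incr a b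


instance : Nontrivial (Lp ℝ 2 μ01) := by
  refine ⟨incr 0 1, 0, ?_⟩
  intro h
  have hn := norm_indicatorConstLp (μ := μ01) (s := Ioc (0:ℝ) 1)
    (hs := measurableSet_Ioc) (c := (1:ℝ))
    (hμs := ((Measure.restrict_apply_le _ _).trans_lt measure_Ioc_lt_top).ne)
    (p := 2) (by norm_num) (by norm_num)
  rw [show indicatorConstLp 2 measurableSet_Ioc _ (1:ℝ) = incr 0 1 from rfl, h] at hn
  have hμ : μ01 (Ioc (0:ℝ) 1) = 1 := by
    rw [μ01, Measure.restrict_apply measurableSet_Ioc,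
      inter_eq_left.mpr Ioc_subset_Icc_self, Real.volume_Ioc]
    norm_num
  rw [measureReal_def, hμ] at hn
  simp at hn

lemma inner_incr (a b c d : ℝ) :
    (inner ℝ (incr a b) (incr c d) : ℝ) = (μ01 (Ioc c d ∩ Ioc a b)).toReal := by
  have hμs : μ01 (Ioc a b) ≠ ⊤ := ((Measure.restrict_apply_le _ _).trans_lt measure_Ioc_lt_top).ne
  rw [show incr a b = indicatorConstLp (μ := μ01) 2 measurableSet_Ioc hμs (1:ℝ) from rfl, L2.inner_indicatorConstLp_eq_setIntegral_inner ℝ]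
  have h1 : ∀ᵐ x ∂(μ01.restrict (Ioc a b)),
      (inner ℝ (1:ℝ) (incr c d x) : ℝ) = (Ioc c d).indicator (fun _ => (1:ℝ)) x := by
    filter_upwards [ae_restrict_of_ae (indicatorConstLp_coeFn (p := 2) (μ := μ01)
      (hs := measurableSet_Ioc (a := c) (b := d))
      (hμs := ((Measure.restrict_apply_le _ _).trans_lt measure_Ioc_lt_top).ne) (c := (1:ℝ)))]
      with x hx
    simp [incr, hx, RCLike.inner_apply]
  rw [integral_congr_ae h1, integral_indicator_const (1 : ℝ) measurableSet_Ioc,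
    measureReal_def, Measure.restrict_apply measurableSet_Ioc]
  simp

lemma μ01_Ioc {a b : ℝ} (h0 : 0 ≤ a) (h1 : b ≤ 1) : (μ01 (Ioc a b)).toReal = b - a ∨ b ≤ a := by
  rcases le_or_gt b a with h | h
  · exact Or.inr h
  refine Or.inl ?_
  rw [μ01, Measure.restrict_apply measurableSet_Ioc, inter_eq_left.mpr
    (Set.Ioc_subset_Icc_self.trans (Icc_subset_Icc h0 h1)), Real.volume_Ioc,
    ENNReal.toReal_ofReal (by linarith)]

lemma inner_nincr_self {a b : ℝ} (h0 : 0 ≤ a) (hab : a < b) (h1 : b ≤ 1) :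
    (inner ℝ (nincr a b) (nincr a b) : ℝ) = 1 := by
  rcases μ01_Ioc h0 h1 with h | h
  · simp only [nincr, inner_smul_left, inner_smul_right, RCLike.conj_to_real, inner_incr,
      Ioc_inter_Ioc, sup_idem, inf_idem] at *
    rw [h]
    have hb : (0:ℝ) < b - a := by linarith
    have : Real.sqrt (b - a) ≠ 0 := by positivity
    rw [← Real.mul_self_sqrt hb.le]
    field_simp
    rw [Real.sqrt_sq (Real.sqrt_nonneg _)]
  · linarith

lemma inner_nincr_disj {a b c d : ℝ} (h : b ≤ c) :
    (inner ℝ (nincr a b) (nincr c d) : ℝ) = 0 := by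
  simp only [nincr, inner_smul_left, inner_smul_right, RCLike.conj_to_real, inner_incr,
    Ioc_inter_Ioc]
  have : Ioc (c ⊔ a) (d ⊓ b) = ∅ :=
    Ioc_eq_empty (not_lt.mpr (inf_le_right.trans (h.trans le_sup_left)))
  rw [this]
  simp

lemma orthonormal_nincr {m : ℕ} (t : Fin (m + 1) → ℝ) (ht : StrictMono t)
    (ht01 : ∀ i, t i ∈ Icc (0:ℝ) 1) :
    Orthonormal ℝ (fun i : Fin m => nincr (t i.castSucc) (t i.succ)) := by
  rw [orthonormal_iff_ite]
  intro i j
  rcases lt_trichotomy i j with h | h | h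
  · have : t i.succ ≤ t j.castSucc := by
      apply ht.monotone
      rw [Fin.le_def]
      simpa only [Fin.val_succ, Fin.coe_castSucc, Nat.add_one_le_iff] using Fin.lt_def.mp h
    rw [if_neg h.ne, inner_nincr_disj this]
  · subst h
    rw [if_pos rfl, inner_nincr_self (ht01 i.castSucc).1 (ht (by simp [Fin.lt_def]))
      (ht01 i.succ).2]
  · have : t j.succ ≤ t i.castSucc := by
      apply ht.monotone
      rw [Fin.le_def]
      simpa only [Fin.val_succ, Fin.coe_castSucc, Nat.add_one_le_iff] using Fin.lt_def.mp h
    rw [if_neg h.ne', real_inner_comm, inner_nincr_disj this]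

lemma det_ge_pow_of_quadform {n : Type*} [Fintype n] [DecidableEq n]
    {A : Matrix n n ℝ} (hA : A.IsHermitian) {a : ℝ} (ha : 0 ≤ a)
    (h : ∀ x : n → ℝ, a * dotProduct x x ≤ dotProduct x (A.mulVec x)) :
    a ^ (Fintype.card n) ≤ A.det := by
  have hev : ∀ i, a ≤ hA.eigenvalues i := by
    intro i
    have he := hA.eigenvalues_eq i
    set v : n → ℝ := ⇑(hA.eigenvectorBasis i) with hv
    have hnorm : dotProduct v v = 1 := by
      have h1 := hA.eigenvectorBasis.orthonormal.1 i
      have : (inner ℝ (hA.eigenvectorBasis i) (hA.eigenvectorBasis i) : ℝ) = 1 := by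
        rw [real_inner_self_eq_norm_sq, h1]; norm_num
      rw [← this, PiLp.inner_apply]
      simp only [dotProduct, RCLike.inner_apply, conj_trivial]
      rfl
    have : hA.eigenvalues i = dotProduct v (A.mulVec v) := by
      rw [he]; simp [dotProduct]
    rw [this]
    calc a = a * dotProduct v v := by rw [hnorm]; ring
    _ ≤ _ := h v
  have : A.det = ∏ i, hA.eigenvalues i := by
    have := hA.det_eq_prod_eigenvalues
    simpa using this
  rw [this]
  calc a ^ Fintype.card n = ∏ _i : n, a := by rw [Finset.prod_const, Finset.card_univ]
  _ ≤ _ := Finset.prod_le_prod (fun _ _ => ha) (fun i _ => hev i)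

lemma quadform_gram {ι : Type*} [Fintype ι] {H : Type*} [NormedAddCommGroup H]
    [InnerProductSpace ℝ H] (w : ι → H) (x : ι → ℝ) :
    dotProduct x ((Matrix.of fun i j => (inner ℝ (w i) (w j) : ℝ)).mulVec x)
      = ‖∑ i, x i • w i‖ ^ 2 := by
  rw [← real_inner_self_eq_norm_sq, sum_inner]
  simp only [dotProduct, Matrix.mulVec, Matrix.of_apply, inner_sum,
    real_inner_smul_left, real_inner_smul_right, Finset.mul_sum, dotProduct]
  exact Finset.sum_congr rfl fun i _ => Finset.sum_congr rfl fun j _ => by ring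


set_option maxHeartbeats 1000000 in
/-- For a compact operator `S` on `L²([0,1])` with `‖S‖ < 1`: `I + S` is invertible; the
vectors `(I+S)1_{(tᵢ,t_{i+1}]}` built from any increasing family `0 ≤ t₁ < … < t_k ≤ 1`
are linearly independent; and the Gram determinants of the images under `I + S` of the
normalized increments, restricted to the indices outside any subset `M`, are bounded
below by a positive constant `c`. -/
theorem perturbed_increments_gram_bound
    (S : Lp ℝ 2 μ01 →L[ℝ] Lp ℝ 2 μ01)
    (hScomp : IsCompactOperator S) (hSnorm : ‖S‖ < 1) :
    IsUnit ((1 : Lp ℝ 2 μ01 →L[ℝ] Lp ℝ 2 μ01) + S) ∧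
    (∀ (m : ℕ) (t : Fin (m + 1) → ℝ), StrictMono t → (∀ i, t i ∈ Icc (0:ℝ) 1) →
      LinearIndependent ℝ
        (fun i : Fin m => incr (t i.castSucc) (t i.succ) +
          S (incr (t i.castSucc) (t i.succ)))) ∧
    (∀ m : ℕ, ∃ c > (0:ℝ), ∀ (t : Fin (m + 1) → ℝ), StrictMono t →
      (∀ i, t i ∈ Icc (0:ℝ) 1) → ∀ M : Finset (Fin m),
        c ≤ Matrix.det (Matrix.of fun i j : {i : Fin m // i ∉ M} =>
          (inner ℝ
            (nincr (t i.1.castSucc) (t i.1.succ) + S (nincr (t i.1.castSucc) (t i.1.succ)))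
            (nincr (t j.1.castSucc) (t j.1.succ) + S (nincr (t j.1.castSucc) (t j.1.succ)))
            : ℝ))) := by
  set T : Lp ℝ 2 μ01 →L[ℝ] Lp ℝ 2 μ01 := 1 + S with hTdef
  have hT : IsUnit T := by
    have h1 : (Units.oneSub (-S) (by simpa using hSnorm)).val = T := by
      rw [Units.val_oneSub, sub_neg_eq_add]
    exact h1 ▸ (Units.oneSub (-S) (by simpa using hSnorm)).isUnit
  obtain ⟨u, hu⟩ := hT
  have hTapp : ∀ x, T x = x + S x := fun x => by
    simp [hTdef, ContinuousLinearMap.add_apply]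
  have hinj : Function.Injective T := by
    intro x y hxy
    have h2 : (↑u⁻¹ * ↑u : Lp ℝ 2 μ01 →L[ℝ] Lp ℝ 2 μ01) x
        = (↑u⁻¹ * ↑u : Lp ℝ 2 μ01 →L[ℝ] Lp ℝ 2 μ01) y := by
      simp only [ContinuousLinearMap.mul_apply, hu, hxy]
    simpa [u.inv_mul] using h2
  have hxle : ∀ x, ‖x‖ ≤ (‖(↑u⁻¹ : Lp ℝ 2 μ01 →L[ℝ] Lp ℝ 2 μ01)‖ + 1) * ‖T x‖ := by
    intro x
    have h1 : x = (↑u⁻¹ : Lp ℝ 2 μ01 →L[ℝ] Lp ℝ 2 μ01) (T x) := by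
      have h2 : (↑u⁻¹ * ↑u : Lp ℝ 2 μ01 →L[ℝ] Lp ℝ 2 μ01) x = x := by
        simp [u.inv_mul]
      rw [← hu]
      exact h2.symm
    calc ‖x‖ = ‖(↑u⁻¹ : Lp ℝ 2 μ01 →L[ℝ] Lp ℝ 2 μ01) (T x)‖ := by rw [← h1]
    _ ≤ ‖(↑u⁻¹ : Lp ℝ 2 μ01 →L[ℝ] Lp ℝ 2 μ01)‖ * ‖T x‖ :=
        ContinuousLinearMap.le_opNorm _ _
    _ ≤ _ := by
        have : (0:ℝ) ≤ ‖T x‖ := norm_nonneg _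
        nlinarith
  refine ⟨⟨u, hu⟩, ?_, ?_⟩
  · -- linear independence
    intro m t ht ht01
    have hon := orthonormal_nincr t ht ht01
    have hli := hon.linearIndependent
    have hli2 : LinearIndependent ℝ
        (fun i : Fin m => T (nincr (t i.castSucc) (t i.succ))) := by
      refine hli.map' T.toLinearMap ?_
      rw [LinearMap.ker_eq_bot]
      exact hinj
    have hc : ∀ i : Fin m, Real.sqrt (t i.succ - t i.castSucc) ≠ 0 := by
      intro i
      have h2 : 0 < t i.succ - t i.castSucc := by
        linarith [ht (Fin.castSucc_lt_succ : i.castSucc < i.succ)]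
      exact (Real.sqrt_pos.mpr h2).ne'
    have := hli2.units_smul (fun i => Units.mk0 _ (hc i))
    convert this using 1
    funext i
    rw [← hTapp]
    show T (incr _ _) = _
    have : incr (t i.castSucc) (t i.succ)
        = Real.sqrt (t i.succ - t i.castSucc) • nincr (t i.castSucc) (t i.succ) := by
      rw [nincr, smul_smul, mul_inv_cancel₀ (hc i), one_smul]
    rw [this, T.map_smul]
    simp [Units.smul_def]
  · -- Gram bound
    intro m
    set b : ℝ := ‖(↑u⁻¹ : Lp ℝ 2 μ01 →L[ℝ] Lp ℝ 2 μ01)‖ + 1 with hbdef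
    have hb1 : 1 ≤ b := by
      have := norm_nonneg (↑u⁻¹ : Lp ℝ 2 μ01 →L[ℝ] Lp ℝ 2 μ01)
      rw [hbdef]; linarith
    have hb0 : 0 < b := lt_of_lt_of_le one_pos hb1
    set a0 : ℝ := (b ^ 2)⁻¹ with ha0def
    have ha0 : 0 < a0 := by positivity
    have ha01 : a0 ≤ 1 := by
      rw [ha0def, inv_le_one_iff₀]
      right
      nlinarith
    refine ⟨a0 ^ m, pow_pos ha0 m, ?_⟩
    intro t ht ht01 M
    have hon := (orthonormal_nincr t ht ht01).comp
      (Subtype.val : {i : Fin m // i ∉ M} → Fin m) Subtype.val_injective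
    set e : {i : Fin m // i ∉ M} → Lp ℝ 2 μ01 :=
      (fun i : Fin m => nincr (t i.castSucc) (t i.succ)) ∘ Subtype.val with hedef
    set G : Matrix {i : Fin m // i ∉ M} {i : Fin m // i ∉ M} ℝ :=
      Matrix.of fun i j => (inner ℝ (T (e i)) (T (e j)) : ℝ) with hGdef
    have hGeq : (Matrix.of fun i j : {i : Fin m // i ∉ M} =>
        (inner ℝ
          (nincr (t i.1.castSucc) (t i.1.succ) + S (nincr (t i.1.castSucc) (t i.1.succ)))
          (nincr (t j.1.castSucc) (t j.1.succ) + S (nincr (t j.1.castSucc) (t j.1.succ)))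
          : ℝ)) = G := by
      funext i j
      simp only [hGdef, Matrix.of_apply, hTapp]
      rfl
    rw [hGeq]
    have hHerm : G.IsHermitian := by
      unfold Matrix.IsHermitian
      ext i j
      simp only [hGdef, Matrix.conjTranspose_apply, Matrix.of_apply, star_trivial,
        real_inner_comm]
    have hquad : ∀ x : {i : Fin m // i ∉ M} → ℝ,
        a0 * dotProduct x x ≤ dotProduct x (G.mulVec x) := by
      intro x
      have hq := quadform_gram (fun i => T (e i)) x
      have hGq : G = Matrix.of fun i j => (inner ℝ (T (e i)) (T (e j)) : ℝ) := rfl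
      rw [hGq, hq]
      set y : Lp ℝ 2 μ01 := ∑ i, x i • e i with hydef
      have hTy : ∑ i, x i • T (e i) = T y := by
        rw [hydef, map_sum]
        exact Finset.sum_congr rfl fun i _ => (map_smul T _ _).symm
      rw [hTy]
      have hyn : (‖y‖:ℝ) ^ 2 = dotProduct x x := by
        rw [← real_inner_self_eq_norm_sq, hydef, hon.inner_sum]
        simp [dotProduct]
      have hle : b⁻¹ * ‖y‖ ≤ ‖T y‖ := by
        rw [inv_mul_le_iff₀ hb0]
        exact hxle y
      have h2 : (b⁻¹ * ‖y‖) ^ 2 ≤ ‖T y‖ ^ 2 := by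
        apply pow_le_pow_left₀ (by positivity) hle
      calc a0 * dotProduct x x = (b⁻¹ * ‖y‖) ^ 2 := by
            rw [← hyn, ha0def, mul_pow, inv_pow]
      _ ≤ ‖T y‖ ^ 2 := h2
    have hdet := det_ge_pow_of_quadform hHerm ha0.le hquad
    refine le_trans ?_ hdet
    apply pow_le_pow_of_le_one ha0.le ha01
    calc Fintype.card {i : Fin m // i ∉ M} ≤ Fintype.card (Fin m) :=
          Fintype.card_subtype_le _
    _ = m := Fintype.card_fin m
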